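/- For every m ≥ 1 and every p ≥ 1, the p-th return word of the envelope word E_{2,m} in the period-doubling sequence D satisfies: r_p(E_{2,m}) = A_{m−1} if Θ_2[p] = a, r_p(E_{2,m}) = A_{m−1} A_m B_{m+1} if Θ_2[p] = b, and r_p(E_{2,m}) = B_m B_{m−1} if Θ_2[p] = c. In other words, the return word sequence {r_p(E_{2,m})}_{p≥1} is the sequence Θ_2 over the alphabet {A_{m−1}, A_{m−1}A_mB_{m+1}, B_mB_{m−1}}. -/

import Mathlib

/-- The alphabet: letters a, b (for the period-doubling sequence) and c (used by Θ₂). -/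
inductive Letter : Type
  | a | b | c
deriving DecidableEq, Repr

open Letter

/-- The period-doubling substitution σ : a ↦ ab, b ↦ aa, extended to words
(the extra letter c is left untouched; it is never produced). -/
def sigmaw : List Letter → List Letter :=
  fun w => w.flatMap fun x => match x with
    | .a => [.a, .b]
    | .b => [.a, .a]
    | .c => [.c]

/-- A_m = σ^m(a). -/
def A (m : ℕ) : List Letter := sigmaw^[m] [.a]

/-- B_m = σ^m(b). -/
def B (m : ℕ) : List Letter := sigmaw^[m] [.b]

/-- δ_m, the last letter of A_m. -/
def delta (m : ℕ) : Letter := (A m).getLastD .a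

/-- The period-doubling sequence D, as a function giving its (n+1)-st letter
(0-indexed); it is the fixed point of σ beginning with a, and A_{n+1} is a
prefix of it of length 2^{n+1} > n. -/
def D (n : ℕ) : Letter := (A (n + 1)).getD n .a

/-- The finite segment D[i .. i+len−1] of the period-doubling sequence,
with 1-based starting position i. -/
def Dseg (i len : ℕ) : List Letter := (List.range len).map fun k => D (i - 1 + k)

/-- u occurs in the finite word w at (1-based) position i. -/
def OccursAt {α : Type*} (u w : List α) (i : ℕ) : Prop :=
  1 ≤ i ∧ i - 1 + u.length ≤ w.length ∧ (w.drop (i - 1)).take u.length = u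

/-- u is a factor of the finite word w. -/
def IsFactor {α : Type*} (u w : List α) : Prop := ∃ i, OccursAt u w i

/-- u occurs in the period-doubling sequence D at (1-based) position i. -/
def DOccursAt (u : List Letter) (i : ℕ) : Prop := 1 ≤ i ∧ Dseg i u.length = u

/-- u is a factor of the period-doubling sequence D. -/
def FactorD (u : List Letter) : Prop := ∃ i, DOccursAt u i

/-- L(u,p): the starting position of the p-th occurrence (p ≥ 1) of u in D. -/
noncomputable def L (u : List Letter) (p : ℕ) : ℕ := Nat.nth (DOccursAt u) (p - 1)

/-- r_p(u): the p-th return word of u (p ≥ 1), i.e. D[L(u,p) .. L(u,p+1)−1];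
r_0(u) is the prefix of D preceding the first occurrence of u. -/
noncomputable def r (u : List Letter) (p : ℕ) : List Letter :=
  if p = 0 then Dseg 1 (L u 1 - 1) else Dseg (L u p) (L u (p + 1) - L u p)

/-- The morphism τ₁ : a ↦ a, b ↦ bb, extended to words. -/
def tau1 : List Letter → List Letter :=
  fun w => w.flatMap fun x => match x with
    | .a => [.a]
    | .b => [.b, .b]
    | .c => [.c]

/-- The morphism τ₂ : a ↦ ab, b ↦ acac, extended to words. -/
def tau2 : List Letter → List Letter :=
  fun w => w.flatMap fun x => match x with
    | .a => [.a, .b]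
    | .b => [.a, .c, .a, .c]
    | .c => [.c]

/-- Θ₁[p], the p-th letter (p ≥ 1) of Θ₁ = τ₁(D): since |τ₁(w)| ≥ |w|, the p-th
letter of Θ₁ is the p-th letter of the image of the length-p prefix of D. -/
def Theta1 (p : ℕ) : Letter := (tau1 (Dseg 1 p)).getD (p - 1) .a

/-- Θ₂[p], the p-th letter (p ≥ 1) of Θ₂ = τ₂(D). -/
def Theta2 (p : ℕ) : Letter := (tau2 (Dseg 1 p)).getD (p - 1) .a

/-- The envelope word E_{1,m} = A_m with its last letter δ_m deleted. -/
def E1 (m : ℕ) : List Letter := (A m).dropLast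

/-- The envelope word E_{2,m} = B_m B_{m−1} with its last letter δ_m deleted. -/
def E2 (m : ℕ) : List Letter := (B m ++ B (m - 1)).dropLast

/-- Enumeration of the envelope words in the order
E_{1,1} ⊏ E_{2,1} ⊏ E_{1,2} ⊏ E_{2,2} ⊏ …. -/
def Eword (k : ℕ) : List Letter := if k % 2 = 0 then E1 (k / 2 + 1) else E2 (k / 2 + 1)

/-- Env(u): the ⊏-least envelope word having u as a factor. -/
noncomputable def Env (u : List Letter) : List Letter :=
  Eword (sInf {k | IsFactor u (Eword k)})

/-- The letterwise complement exchanging a and b. -/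
def comp : Letter → Letter
  | .a => .b
  | .b => .a
  | .c => .c

/-! ### Part 1: basic structure -/

lemma sigmaw_append (u v : List Letter) : sigmaw (u ++ v) = sigmaw u ++ sigmaw v :=
  List.flatMap_append (xs := u) (ys := v)

lemma sigmaw_singleton_ne_c {x : Letter} (hx : x ≠ .c) :
    sigmaw [x] = [.a, comp x] := by
  cases x <;> simp at hx ⊢ <;> rfl

lemma A_succ (m : ℕ) : A (m + 1) = sigmaw (A m) := Function.iterate_succ_apply' _ _ _

lemma B_succ (m : ℕ) : B (m + 1) = sigmaw (B m) := Function.iterate_succ_apply' _ _ _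

lemma A_zero : A 0 = [.a] := rfl
lemma B_zero : B 0 = [.b] := rfl

lemma A_succ' (m : ℕ) : A (m + 1) = A m ++ B m := by
  induction m with
  | zero => rfl
  | succ m ih =>
    conv_lhs => rw [A_succ, ih, sigmaw_append]
    rw [← A_succ, ← B_succ]

lemma B_succ' (m : ℕ) : B (m + 1) = A m ++ A m := by
  induction m with
  | zero => rfl
  | succ m ih =>
    conv_lhs => rw [B_succ, ih, sigmaw_append]
    rw [← A_succ]

lemma c_not_mem_A (m : ℕ) : Letter.c ∉ A m := by
  induction m with
  | zero => simp [A_zero]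
  | succ m ih =>
    rw [A_succ]
    intro hc
    rcases List.mem_flatMap.1 hc with ⟨x, hx, hx2⟩
    cases x <;> simp_all

lemma c_not_mem_B (m : ℕ) : Letter.c ∉ B m := by
  intro h
  have := A_succ' m
  exact c_not_mem_A (m + 1) (by rw [this]; exact List.mem_append_right _ h)

lemma sigmaw_length {w : List Letter} (hw : Letter.c ∉ w) :
    (sigmaw w).length = 2 * w.length := by
  induction w with
  | nil => rfl
  | cons x t ih =>
    have hx : x ≠ .c := fun h => hw (h ▸ List.mem_cons_self (a := x) (l := t))
    have ht : Letter.c ∉ t := fun h => hw (List.mem_cons_of_mem _ h)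
    have : sigmaw (x :: t) = sigmaw [x] ++ sigmaw t := sigmaw_append [x] t
    rw [this, List.length_append, sigmaw_singleton_ne_c hx, ih ht]
    simp; ring

lemma length_A (m : ℕ) : (A m).length = 2 ^ m := by
  induction m with
  | zero => rfl
  | succ m ih => rw [A_succ, sigmaw_length (c_not_mem_A m), ih]; ring

lemma length_B (m : ℕ) : (B m).length = 2 ^ m := by
  induction m with
  | zero => rfl
  | succ m ih => rw [B_succ, sigmaw_length (c_not_mem_B m), ih]; ring

lemma A_prefix_succ (m : ℕ) : A m <+: A (m + 1) := by
  rw [A_succ']; exact List.prefix_append _ _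

lemma A_prefix (m M : ℕ) (h : m ≤ M) : A m <+: A M := by
  induction M with
  | zero => simp [Nat.le_zero.1 h]
  | succ M ih =>
    rcases Nat.lt_or_ge m (M+1) with h' | h'
    · exact (ih (by omega)).trans (A_prefix_succ M)
    · have : m = M + 1 := by omega
      simp [this]

lemma lt_two_pow_succ (n : ℕ) : n < 2 ^ (n + 1) :=
  (Nat.lt_two_pow_self (n := n)).trans_le (Nat.pow_le_pow_right (by norm_num) (Nat.le_succ n))

lemma two_mul_lt_pow (k : ℕ) : 2 * k + 1 < 2 ^ (k + 2) := by
  induction k with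
  | zero => norm_num
  | succ k ih =>
    rw [show k + 1 + 2 = (k + 2) + 1 by ring, pow_succ]
    have h1 : (1:ℕ) ≤ 2 ^ (k + 2) := Nat.one_le_two_pow
    omega

/-- `D n` can be evaluated in any `A M` with `n < 2^M`. -/
lemma D_eq_getD (M n : ℕ) (h : n < 2 ^ M) : D n = (A M).getD n .a := by
  unfold D
  have h1 : n < (A (n+1)).length := by rw [length_A]; exact lt_two_pow_succ n
  have h2 : n < (A M).length := by rw [length_A]; exact h
  rcases Nat.le_total (n+1) M with hM | hM
  · rcases A_prefix _ _ hM with ⟨t, ht⟩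
    rw [← ht, List.getD_append _ _ _ _ h1]
  · rcases A_prefix _ _ hM with ⟨t, ht⟩
    rw [← ht, List.getD_append _ _ _ _ h2]

/-- index into sigmaw image -/
lemma sigmaw_getD (w : List Letter) (hw : Letter.c ∉ w) (k : ℕ) (hk : k < w.length) :
    (sigmaw w).getD (2 * k) .a = .a ∧ (sigmaw w).getD (2 * k + 1) .a = comp (w.getD k .a) := by
  induction w generalizing k with
  | nil => simp at hk
  | cons x t ih =>
    have hx : x ≠ .c := fun h => hw (h ▸ List.mem_cons_self (a := x) (l := t))
    have ht : Letter.c ∉ t := fun h => hw (List.mem_cons_of_mem _ h)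
    have hsplit : sigmaw (x :: t) = sigmaw [x] ++ sigmaw t := sigmaw_append [x] t
    rw [hsplit, sigmaw_singleton_ne_c hx]
    simp only [List.cons_append, List.nil_append]
    cases k with
    | zero => simp
    | succ k =>
      have hk' : k < t.length := by simpa using hk
      have e1 : (Letter.a :: comp x :: sigmaw t).getD (2 * (k+1)) .a
          = (sigmaw t).getD (2 * k) .a := by
        rw [show 2 * (k+1) = 2 * k + 1 + 1 by ring, List.getD_cons_succ,
          List.getD_cons_succ]
      have e2 : (Letter.a :: comp x :: sigmaw t).getD (2 * (k+1) + 1) .a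
          = (sigmaw t).getD (2 * k + 1) .a := by
        rw [show 2 * (k+1) + 1 = 2 * k + 1 + 1 + 1 by ring, List.getD_cons_succ,
          List.getD_cons_succ]
      refine ⟨?_, ?_⟩
      · rw [e1]; exact (ih ht k hk').1
      · rw [e2, (ih ht k hk').2]; simp

lemma D_even (k : ℕ) : D (2 * k) = .a := by
  have h2k : 2 * k < 2 ^ (k + 2) := (by omega : 2*k < 2*k+1).trans (two_mul_lt_pow k)
  rw [D_eq_getD (k+2) _ h2k, A_succ]
  exact (sigmaw_getD (A (k+1)) (c_not_mem_A _) k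
    (by rw [length_A]; exact lt_two_pow_succ k)).1

lemma D_odd (k : ℕ) : D (2 * k + 1) = comp (D k) := by
  have hk : k < 2 ^ (k+1) := lt_two_pow_succ k
  rw [D_eq_getD (k+2) _ (two_mul_lt_pow k), A_succ,
    (sigmaw_getD (A (k+1)) (c_not_mem_A _) k (by rw [length_A]; exact hk)).2,
    ← D_eq_getD (k+1) _ hk]

lemma D_ne_c (n : ℕ) : D n ≠ .c := by
  induction n using Nat.strong_induction_on with
  | _ n ih =>
    rcases Nat.even_or_odd n with ⟨k, hk⟩ | ⟨k, hk⟩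
    · rw [hk, show k + k = 2 * k by ring, D_even]; simp
    · rw [hk, D_odd]
      rcases Nat.eq_zero_or_pos n with h0 | h0
      · omega
      · have hkn := ih k (by omega)
        cases h : D k with
        | a => simp [comp]
        | b => simp [comp]
        | c => exact absurd h hkn

lemma D_zero : D 0 = .a := rfl

lemma comp_eq_a_iff {x : Letter} (hx : x ≠ .c) : comp x = .a ↔ x = .b := by
  cases x <;> simp_all [comp]

lemma comp_eq_b_iff {x : Letter} (hx : x ≠ .c) : comp x = .b ↔ x = .a := by
  cases x <;> simp_all [comp]

lemma D_odd_a_iff (k : ℕ) : D (2 * k + 1) = .a ↔ D k = .b := by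
  rw [D_odd]; exact comp_eq_a_iff (D_ne_c k)

lemma D_odd_b_iff (k : ℕ) : D (2 * k + 1) = .b ↔ D k = .a := by
  rw [D_odd]; exact comp_eq_b_iff (D_ne_c k)

/-! ### Part 2: Dseg lemmas -/

lemma Dseg_length (i len : ℕ) : (Dseg i len).length = len := by simp [Dseg]

lemma Dseg_succ (i len : ℕ) : Dseg i (len + 1) = Dseg i len ++ [D (i - 1 + len)] := by
  simp [Dseg, List.range_succ]

lemma Dseg_zero (i : ℕ) : Dseg i 0 = [] := rfl

lemma Dseg_getD (i len k : ℕ) (hk : k < len) :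
    (Dseg i len).getD k .a = D (i - 1 + k) := by
  unfold Dseg
  rw [List.getD_eq_getElem _ _ (by simpa using hk)]
  simp

lemma Dseg_append (i l1 l2 : ℕ) (hi : 1 ≤ i) :
    Dseg i (l1 + l2) = Dseg i l1 ++ Dseg (i + l1) l2 := by
  induction l2 with
  | zero => simp [Dseg_zero]
  | succ l2 ih =>
    rw [show l1 + (l2 + 1) = (l1 + l2) + 1 by ring, Dseg_succ, ih, Dseg_succ,
      List.append_assoc, show i - 1 + (l1 + l2) = i + l1 - 1 + l2 from by omega]

lemma c_not_mem_Dseg (i len : ℕ) : Letter.c ∉ Dseg i len := by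
  unfold Dseg
  intro h
  rcases List.mem_map.1 h with ⟨k, _, hk⟩
  exact D_ne_c _ hk

lemma Dseg_double (i len : ℕ) (hi : 1 ≤ i) :
    Dseg (2 * i - 1) (2 * len) = sigmaw (Dseg i len) := by
  induction len with
  | zero => simp [Dseg_zero]; rfl
  | succ len ih =>
    rw [show 2 * (len + 1) = 2 * len + 1 + 1 by ring, Dseg_succ, Dseg_succ,
      show (2 * len + 1 : ℕ) = 2 * len + 1 by rfl]
    rw [Dseg_succ, sigmaw_append, ih, List.append_assoc]
    congr 1
    have h1 : 2 * i - 1 - 1 + (2 * len) = 2 * (i - 1 + len) := by omega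
    have h2 : 2 * i - 1 - 1 + (2 * len + 1) = 2 * (i - 1 + len) + 1 := by omega
    rw [h1, h2, D_even, D_odd, sigmaw_singleton_ne_c (D_ne_c _)]
    rfl

/-! ### Part 3: counts -/

open Nat

local notation "cb" => Nat.count (fun n => D n = Letter.b)
local notation "ca" => Nat.count (fun n => D n = Letter.a)

lemma count_ab (n : ℕ) : ca n + cb n = n := by
  induction n with
  | zero => simp
  | succ n ih =>
    rw [Nat.count_succ, Nat.count_succ]
    have := D_ne_c n
    cases h : D n <;> simp [h] at this ⊢ <;> omega

lemma ca_double (j : ℕ) : ca (2 * j) = j + cb j := by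
  induction j with
  | zero => simp
  | succ j ih =>
    rw [show 2 * (j+1) = 2*j + 1 + 1 by ring, Nat.count_succ, Nat.count_succ, ih,
      Nat.count_succ, D_even]
    have hne := D_ne_c j
    by_cases h : D j = .b
    · rw [if_pos ((D_odd_a_iff j).2 h), if_pos h]
      norm_num; omega
    · rw [if_neg (fun ha => h ((D_odd_a_iff j).1 ha)), if_neg h]
      norm_num; omega

lemma cb_double (j : ℕ) : cb (2 * j) = ca j := by
  have h1 := ca_double j
  have h2 := count_ab (2 * j)
  have h3 := count_ab j
  omega

/-! ### Part 4: occurrences of E2 1 = "aa" -/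

instance decDOccursAt (u : List Letter) : DecidablePred (DOccursAt u) := fun i =>
  inferInstanceAs (Decidable (1 ≤ i ∧ Dseg i u.length = u))

lemma E2_one : E2 1 = [.a, .a] := rfl

lemma Dseg_one (i : ℕ) : Dseg i 1 = [D (i - 1)] := by
  rw [show (1:ℕ) = 0 + 1 by rfl, Dseg_succ]
  simp [Dseg_zero]

lemma Dseg_two (i : ℕ) (hi : 1 ≤ i) : Dseg i 2 = [D (i-1), D i] := by
  rw [show (2:ℕ) = 1 + 1 by rfl, Dseg_succ, Dseg_one,
    show i - 1 + 1 = i from by omega]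
  rfl

lemma occ1_iff (i : ℕ) : DOccursAt (E2 1) i ↔ 1 ≤ i ∧ D (i - 1) = .a ∧ D i = .a := by
  unfold DOccursAt
  rw [E2_one]
  constructor
  · rintro ⟨hi, hseg⟩
    rw [show ([Letter.a, Letter.a]).length = 2 from rfl, Dseg_two i hi] at hseg
    simp at hseg
    exact ⟨hi, hseg⟩
  · rintro ⟨hi, h1, h2⟩
    refine ⟨hi, ?_⟩
    rw [show ([Letter.a, Letter.a]).length = 2 from rfl, Dseg_two i hi, h1, h2]

lemma not_DOccursAt_zero (u : List Letter) : ¬ DOccursAt u 0 := fun h => by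
  exact absurd h.1 (by omega)

lemma occ_odd_iff (k : ℕ) : DOccursAt (E2 1) (2 * k + 1) ↔ D k = .b := by
  rw [occ1_iff]
  have h1 : (2 * k + 1) - 1 = 2 * k := by omega
  rw [h1, D_even]
  simp [D_odd_a_iff]

lemma occ_even_iff (k : ℕ) : DOccursAt (E2 1) (2 * k + 2) ↔ D k = .b := by
  rw [occ1_iff]
  have h1 : (2 * k + 2) - 1 = 2 * k + 1 := by omega
  rw [h1, show 2 * k + 2 = 2 * (k + 1) from by ring, D_even]
  simp [D_odd_a_iff]
  exact fun _ => by omega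

local notation "cO" => Nat.count (DOccursAt (E2 1))

lemma cO_odd (k : ℕ) : cO (2 * k + 1) = 2 * cb k := by
  induction k with
  | zero =>
    rw [show 2 * 0 + 1 = 0 + 1 from rfl, Nat.count_succ, if_neg (not_DOccursAt_zero _)]
    simp
  | succ k ih =>
    rw [show 2 * (k+1) + 1 = (2*k+2) + 1 by ring, Nat.count_succ,
      show (2*k+2 : ℕ) = (2*k+1) + 1 from by ring, Nat.count_succ, ih, Nat.count_succ]
    by_cases h : D k = .b
    · rw [if_pos ((occ_odd_iff k).2 h), if_pos ((occ_even_iff k).2 h), if_pos h]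
      ring
    · rw [if_neg (fun hh => h ((occ_odd_iff k).1 hh)),
        if_neg (fun hh => h ((occ_even_iff k).1 hh)), if_neg h]
      ring

lemma cO_even (k : ℕ) : cO (2 * k + 2) = 2 * cb k + (if D k = .b then 1 else 0) := by
  rw [show (2*k+2 : ℕ) = (2*k+1) + 1 from by ring, Nat.count_succ, cO_odd]
  by_cases h : D k = .b
  · rw [if_pos ((occ_odd_iff k).2 h), if_pos h]
  · rw [if_neg (fun hh => h ((occ_odd_iff k).1 hh)), if_neg h]

lemma nth_O_first {k : ℕ} (hk : D k = .b) :
    Nat.nth (DOccursAt (E2 1)) (2 * cb k) = 2 * k + 1 := by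
  have := Nat.nth_count (p := DOccursAt (E2 1)) ((occ_odd_iff k).2 hk)
  rwa [cO_odd] at this

lemma nth_O_second {k : ℕ} (hk : D k = .b) :
    Nat.nth (DOccursAt (E2 1)) (2 * cb k + 1) = 2 * k + 2 := by
  have := Nat.nth_count (p := DOccursAt (E2 1)) ((occ_even_iff k).2 hk)
  rwa [cO_even, if_pos hk] at this

/-! ### Part 5: Θ₂ evaluation -/

lemma tau2_append (u v : List Letter) : tau2 (u ++ v) = tau2 u ++ tau2 v :=
  List.flatMap_append (xs := u) (ys := v)

lemma len_tau2_prefix (j : ℕ) : (tau2 (Dseg 1 j)).length = 2 * (j + cb j) := by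
  induction j with
  | zero => simp [Dseg_zero]; rfl
  | succ j ih =>
    rw [Dseg_succ, tau2_append, List.length_append, ih, Nat.count_succ,
      show (1:ℕ) - 1 + j = j from by simp]
    cases hj : D j with
    | a =>
      rw [show (tau2 [Letter.a]).length = 2 from rfl,
        if_neg (by simp : ¬(Letter.a = Letter.b))]
      ring
    | b =>
      rw [show (tau2 [Letter.b]).length = 4 from rfl, if_pos rfl]
      ring
    | c => exact absurd hj (D_ne_c j)

lemma Theta2_eval (j o p : ℕ) (hp : 1 ≤ p) (hidx : p - 1 = 2 * (j + cb j) + o)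
    (ho : o < (tau2 [D j]).length) : Theta2 p = (tau2 [D j]).getD o .a := by
  have hcb : cb j ≤ j := by have := count_ab j; omega
  have hpj : j + 1 ≤ p := by omega
  unfold Theta2
  have hsplit1 : Dseg 1 p = Dseg 1 j ++ Dseg (1 + j) (p - j) := by
    rw [← Dseg_append 1 j (p - j) (by omega), show j + (p - j) = p from by omega]
  have hsplit2 : Dseg (1 + j) (p - j) = Dseg (1 + j) 1 ++ Dseg (1 + j + 1) (p - j - 1) := by
    rw [← Dseg_append (1 + j) 1 (p - j - 1) (by omega),
      show (1 : ℕ) + (p - j - 1) = p - j from by omega]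
  have hone : Dseg (1 + j) 1 = [D j] := by
    rw [Dseg_one, show 1 + j - 1 = j from by omega]
  rw [hsplit1, hsplit2, hone, tau2_append, tau2_append,
    List.getD_append_right _ _ _ _ (by rw [len_tau2_prefix]; omega),
    len_tau2_prefix, show p - 1 - 2 * (j + cb j) = o from by omega,
    List.getD_append _ _ _ _ ho]

lemma tau2_a : tau2 [Letter.a] = [.a, .b] := rfl
lemma tau2_b : tau2 [Letter.b] = [.a, .c, .a, .c] := rfl

/-! ### Part 6: point values and counts at explicit positions -/

lemma comp_comp {x : Letter} (hx : x ≠ .c) : comp (comp x) = x := by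
  cases x <;> simp_all [comp]

lemma D_4j1 (j : ℕ) : D (4*j+1) = .b := by
  rw [show 4*j+1 = 2*(2*j)+1 by ring, D_odd, D_even]; rfl

lemma D_4j3 (j : ℕ) : D (4*j+3) = D j := by
  rw [show 4*j+3 = 2*(2*j+1)+1 by ring, D_odd, D_odd, comp_comp (D_ne_c j)]

lemma D8j2 (j : ℕ) : D (8*j+2) = .a := by rw [show 8*j+2 = 2*(4*j+1) by ring, D_even]
lemma D8j3 (j : ℕ) : D (8*j+3) = .a := by
  rw [show 8*j+3 = 2*(4*j+1)+1 by ring, D_odd, D_4j1]; rfl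
lemma D8j4 (j : ℕ) : D (8*j+4) = .a := by rw [show 8*j+4 = 2*(4*j+2) by ring, D_even]
lemma D8j5 (j : ℕ) : D (8*j+5) = .b := by
  rw [show 8*j+5 = 2*(4*j+2)+1 by ring, D_odd, show 4*j+2 = 2*(2*j+1) by ring, D_even]; rfl
lemma D8j6 (j : ℕ) : D (8*j+6) = .a := by rw [show 8*j+6 = 2*(4*j+3) by ring, D_even]
lemma D8j7 (j : ℕ) : D (8*j+7) = comp (D j) := by
  rw [show 8*j+7 = 2*(4*j+3)+1 by ring, D_odd, D_4j3]
lemma D8j8 (j : ℕ) : D (8*j+8) = .a := by rw [show 8*j+8 = 2*(4*j+4) by ring, D_even]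
lemma D8j9 (j : ℕ) : D (8*j+9) = .b := by
  rw [show 8*j+9 = 2*(4*j+4)+1 by ring, D_odd, show 4*j+4 = 2*(2*j+2) by ring, D_even]; rfl

lemma cb_succ (j : ℕ) : cb (j+1) = cb j + (if D j = .b then 1 else 0) := Nat.count_succ _ _

lemma cb_4j1 (j : ℕ) : cb (4*j+1) = j + cb j := by
  have h4 : D (4*j) = .a := by rw [show 4*j = 2*(2*j) by ring, D_even]
  rw [show 4*j+1 = (4*j)+1 from rfl, cb_succ, if_neg (by simp [h4]),
    show 4*j = 2*(2*j) by ring, cb_double, ca_double]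
  omega

lemma cb_4j3 (j : ℕ) : cb (4*j+3) = j + cb j + 1 := by
  have h4 : D (4*j+2) = .a := by rw [show 4*j+2 = 2*(2*j+1) by ring, D_even]
  rw [show 4*j+3 = (4*j+2)+1 from rfl, cb_succ, if_neg (by simp [h4]),
    show 4*j+2 = 2*(2*j+1) by ring, cb_double,
    show 2*j+1 = (2*j)+1 from rfl, Nat.count_succ, if_pos (D_even j), ca_double]

/-! ### Part 7: trichotomy -/

lemma trichotomy (u : ℕ) : ∃ j, (D j = .a ∧ u = j + cb j) ∨
    (D j = .b ∧ (u = j + cb j ∨ u = j + cb j + 1)) := by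
  induction u with
  | zero => exact ⟨0, Or.inl ⟨D_zero, by simp⟩⟩
  | succ u ih =>
    obtain ⟨j, h⟩ := ih
    rcases h with ⟨ha, hu⟩ | ⟨hb, hu⟩
    · have hnext : (j+1) + cb (j+1) = u + 1 := by
        rw [cb_succ, if_neg (by simp [ha])]; omega
      cases hD : D (j+1) with
      | a => exact ⟨j+1, Or.inl ⟨hD, hnext.symm⟩⟩
      | b => exact ⟨j+1, Or.inr ⟨hD, Or.inl hnext.symm⟩⟩
      | c => exact absurd hD (D_ne_c _)
    · rcases hu with hu | hu
      · exact ⟨j, Or.inr ⟨hb, Or.inr (by omega)⟩⟩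
      · have hnext : (j+1) + cb (j+1) = u + 1 := by
          rw [cb_succ, if_pos hb]; omega
        cases hD : D (j+1) with
        | a => exact ⟨j+1, Or.inl ⟨hD, hnext.symm⟩⟩
        | b => exact ⟨j+1, Or.inr ⟨hD, Or.inl hnext.symm⟩⟩
        | c => exact absurd hD (D_ne_c _)

/-! ### Part 8: segment evaluations -/

lemma Dseg_expand (i len : ℕ) : Dseg (i+1) len = (List.range len).map (fun k => D (i+k)) := by
  simp [Dseg]

lemma seg1_3 (j : ℕ) : Dseg (8*j+3) 1 = [.a] := by
  rw [Dseg_one, show 8*j+3-1 = 8*j+2 from by omega, D8j2]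

lemma seg1_7 (j : ℕ) : Dseg (8*j+7) 1 = [.a] := by
  rw [Dseg_one, show 8*j+7-1 = 8*j+6 from by omega, D8j6]

lemma seg7 (j : ℕ) (hj : D j = .a) :
    Dseg (8*j+4) 7 = [.a,.a,.b,.a,.b,.a,.b] := by
  rw [show 8*j+4 = (8*j+3)+1 by ring, Dseg_expand,
    show List.range 7 = [0,1,2,3,4,5,6] from rfl]
  simp only [List.map_cons, List.map_nil]
  rw [show 8*j+3+0 = 8*j+3 by ring, show 8*j+3+1 = 8*j+4 by ring,
    show 8*j+3+2 = 8*j+5 by ring, show 8*j+3+3 = 8*j+6 by ring,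
    show 8*j+3+4 = 8*j+7 by ring, show 8*j+3+5 = 8*j+8 by ring,
    show 8*j+3+6 = 8*j+9 by ring,
    D8j3, D8j4, D8j5, D8j6, D8j7, D8j8, D8j9, hj]
  rfl

lemma seg3_4 (j : ℕ) : Dseg (8*j+4) 3 = [.a,.a,.b] := by
  rw [show 8*j+4 = (8*j+3)+1 by ring, Dseg_expand,
    show List.range 3 = [0,1,2] from rfl]
  simp only [List.map_cons, List.map_nil]
  rw [show 8*j+3+0 = 8*j+3 by ring, show 8*j+3+1 = 8*j+4 by ring,
    show 8*j+3+2 = 8*j+5 by ring, D8j3, D8j4, D8j5]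

lemma seg3_8 (j : ℕ) (hj : D j = .b) : Dseg (8*j+8) 3 = [.a,.a,.b] := by
  rw [show 8*j+8 = (8*j+7)+1 by ring, Dseg_expand,
    show List.range 3 = [0,1,2] from rfl]
  simp only [List.map_cons, List.map_nil]
  rw [show 8*j+7+0 = 8*j+7 by ring, show 8*j+7+1 = 8*j+8 by ring,
    show 8*j+7+2 = 8*j+9 by ring, D8j7, D8j8, D8j9, hj]
  rfl

lemma word_a : A 0 = [.a] := rfl
lemma word_b : A 0 ++ A 1 ++ B 2 = [.a,.a,.b,.a,.b,.a,.b] := rfl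
lemma word_c : B 1 ++ B 0 = [.a,.a,.b] := rfl

/-! ### Part 9: the base case m = 1 -/

lemma triple_helper {T : Letter} {p : ℕ} {u wa wb wc : List Letter}
    (hth : Theta2 p = T)
    (hr : r u p = match T with | .a => wa | .b => wb | .c => wc) :
    (Theta2 p = .a → r u p = wa) ∧ (Theta2 p = .b → r u p = wb) ∧
    (Theta2 p = .c → r u p = wc) := by
  cases T with
  | a => exact ⟨fun _ => hr, fun h => Letter.noConfusion (hth.symm.trans h),
      fun h => Letter.noConfusion (hth.symm.trans h)⟩
  | b => exact ⟨fun h => Letter.noConfusion (hth.symm.trans h), fun _ => hr,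
      fun h => Letter.noConfusion (hth.symm.trans h)⟩
  | c => exact ⟨fun h => Letter.noConfusion (hth.symm.trans h),
      fun h => Letter.noConfusion (hth.symm.trans h), fun _ => hr⟩

lemma r_eq (u : List Letter) (p : ℕ) (hp : 1 ≤ p) :
    r u p = Dseg (Nat.nth (DOccursAt u) (p-1))
      (Nat.nth (DOccursAt u) p - Nat.nth (DOccursAt u) (p-1)) := by
  unfold r L
  rw [if_neg (by omega : ¬ p = 0), show p + 1 - 1 = p from rfl]

theorem base_case (p : ℕ) (hp : 1 ≤ p) :
    (Theta2 p = .a → r (E2 1) p = A 0) ∧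
    (Theta2 p = .b → r (E2 1) p = A 0 ++ A 1 ++ B 2) ∧
    (Theta2 p = .c → r (E2 1) p = B 1 ++ B 0) := by
  rcases Nat.even_or_odd (p - 1) with ⟨u, hu⟩ | ⟨u, hu⟩
  all_goals obtain ⟨j, hj⟩ := trichotomy u
  -- six cases
  · rcases hj with ⟨hja, hju⟩ | ⟨hjb, hju⟩
    · -- A, P = 2f : Theta2 = a, r = [a]
      have n1 : Nat.nth (DOccursAt (E2 1)) (p-1) = 8*j+3 := by
        rw [show p - 1 = 2 * cb (4*j+1) from by rw [cb_4j1]; omega]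
        rw [nth_O_first (D_4j1 j)]; ring
      have n2 : Nat.nth (DOccursAt (E2 1)) p = 8*j+4 := by
        rw [show p = 2 * cb (4*j+1) + 1 from by rw [cb_4j1]; omega]
        rw [nth_O_second (D_4j1 j)]; ring
      have hth : Theta2 p = .a := by
        have := Theta2_eval j 0 p hp (by omega) (by rw [hja]; decide)
        rw [hja] at this; exact this
      have hr : r (E2 1) p = A 0 := by
        rw [r_eq _ p hp, n1, n2, show 8*j+4 - (8*j+3) = 1 from by omega, seg1_3, word_a]
      exact triple_helper hth hr
    · rcases hju with hju | hju
      · -- B, u = f, P = 2f : Theta2 = a, r = [a]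
        have n1 : Nat.nth (DOccursAt (E2 1)) (p-1) = 8*j+3 := by
          rw [show p - 1 = 2 * cb (4*j+1) from by rw [cb_4j1]; omega]
          rw [nth_O_first (D_4j1 j)]; ring
        have n2 : Nat.nth (DOccursAt (E2 1)) p = 8*j+4 := by
          rw [show p = 2 * cb (4*j+1) + 1 from by rw [cb_4j1]; omega]
          rw [nth_O_second (D_4j1 j)]; ring
        have hth : Theta2 p = .a := by
          have := Theta2_eval j 0 p hp (by omega) (by rw [hjb]; decide)
          rw [hjb] at this; exact this
        have hr : r (E2 1) p = A 0 := by
          rw [r_eq _ p hp, n1, n2, show 8*j+4 - (8*j+3) = 1 from by omega, seg1_3, word_a]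
        exact triple_helper hth hr
      · -- B, u = f+1, P = 2f+2 : Theta2 = a, r = [a]
        have hb43 : D (4*j+3) = .b := by rw [D_4j3]; exact hjb
        have n1 : Nat.nth (DOccursAt (E2 1)) (p-1) = 8*j+7 := by
          rw [show p - 1 = 2 * cb (4*j+3) from by rw [cb_4j3]; omega]
          rw [nth_O_first hb43]; ring
        have n2 : Nat.nth (DOccursAt (E2 1)) p = 8*j+8 := by
          rw [show p = 2 * cb (4*j+3) + 1 from by rw [cb_4j3]; omega]
          rw [nth_O_second hb43]; ring
        have hth : Theta2 p = .a := by
          have := Theta2_eval j 2 p hp (by omega) (by rw [hjb]; decide)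
          rw [hjb] at this; exact this
        have hr : r (E2 1) p = A 0 := by
          rw [r_eq _ p hp, n1, n2, show 8*j+8 - (8*j+7) = 1 from by omega, seg1_7, word_a]
        exact triple_helper hth hr
  · rcases hj with ⟨hja, hju⟩ | ⟨hjb, hju⟩
    · -- A, P = 2f+1 : Theta2 = b, r = A0 A1 B2
      have hb45 : D (4*(j+1)+1) = .b := D_4j1 (j+1)
      have hcb45 : cb (4*(j+1)+1) = j + cb j + 1 := by
        rw [cb_4j1 (j+1), cb_succ, if_neg (by simp [hja])]
        omega
      have n1 : Nat.nth (DOccursAt (E2 1)) (p-1) = 8*j+4 := by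
        rw [show p - 1 = 2 * cb (4*j+1) + 1 from by rw [cb_4j1]; omega]
        rw [nth_O_second (D_4j1 j)]; ring
      have n2 : Nat.nth (DOccursAt (E2 1)) p = 8*j+11 := by
        rw [show p = 2 * cb (4*(j+1)+1) from by rw [hcb45]; omega]
        rw [nth_O_first hb45]; ring
      have hth : Theta2 p = .b := by
        have := Theta2_eval j 1 p hp (by omega) (by rw [hja]; decide)
        rw [hja] at this; exact this
      have hr : r (E2 1) p = A 0 ++ A 1 ++ B 2 := by
        rw [r_eq _ p hp, n1, n2, show 8*j+11 - (8*j+4) = 7 from by omega,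
          seg7 j hja, word_b]
      exact triple_helper hth hr
    · rcases hju with hju | hju
      · -- B, u = f, P = 2f+1 : Theta2 = c, r = B1 B0
        have hb43 : D (4*j+3) = .b := by rw [D_4j3]; exact hjb
        have n1 : Nat.nth (DOccursAt (E2 1)) (p-1) = 8*j+4 := by
          rw [show p - 1 = 2 * cb (4*j+1) + 1 from by rw [cb_4j1]; omega]
          rw [nth_O_second (D_4j1 j)]; ring
        have n2 : Nat.nth (DOccursAt (E2 1)) p = 8*j+7 := by
          rw [show p = 2 * cb (4*j+3) from by rw [cb_4j3]; omega]
          rw [nth_O_first hb43]; ring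
        have hth : Theta2 p = .c := by
          have := Theta2_eval j 1 p hp (by omega) (by rw [hjb]; decide)
          rw [hjb] at this; exact this
        have hr : r (E2 1) p = B 1 ++ B 0 := by
          rw [r_eq _ p hp, n1, n2, show 8*j+7 - (8*j+4) = 3 from by omega,
            seg3_4, word_c]
        exact triple_helper hth hr
      · -- B, u = f+1, P = 2f+3 : Theta2 = c, r = B1 B0
        have hb43 : D (4*j+3) = .b := by rw [D_4j3]; exact hjb
        have hb45 : D (4*(j+1)+1) = .b := D_4j1 (j+1)
        have hcb45 : cb (4*(j+1)+1) = j + cb j + 2 := by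
          rw [cb_4j1 (j+1), cb_succ, if_pos hjb]
          omega
        have n1 : Nat.nth (DOccursAt (E2 1)) (p-1) = 8*j+8 := by
          rw [show p - 1 = 2 * cb (4*j+3) + 1 from by rw [cb_4j3]; omega]
          rw [nth_O_second hb43]; ring
        have n2 : Nat.nth (DOccursAt (E2 1)) p = 8*j+11 := by
          rw [show p = 2 * cb (4*(j+1)+1) from by rw [hcb45]; omega]
          rw [nth_O_first hb45]; ring
        have hth : Theta2 p = .c := by
          have := Theta2_eval j 3 p hp (by omega) (by rw [hjb]; decide)
          rw [hjb] at this; exact this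
        have hr : r (E2 1) p = B 1 ++ B 0 := by
          rw [r_eq _ p hp, n1, n2, show 8*j+11 - (8*j+8) = 3 from by omega,
            seg3_8 j hjb, word_c]
        exact triple_helper hth hr

/-! ### Part 10: the induction step -/

lemma comp_inj {x y : Letter} (hx : x ≠ .c) (hy : y ≠ .c) (h : comp x = comp y) : x = y := by
  cases x <;> cases y <;> simp_all [comp]

lemma sigmaw_cons_ne_c {x : Letter} (t : List Letter) (hx : x ≠ .c) :
    sigmaw (x :: t) = .a :: comp x :: sigmaw t := by
  rw [show x :: t = [x] ++ t from rfl, sigmaw_append, sigmaw_singleton_ne_c hx]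
  rfl

lemma sigmaw_inj : ∀ (u v : List Letter), Letter.c ∉ u → Letter.c ∉ v →
    sigmaw u = sigmaw v → u = v := by
  intro u
  induction u with
  | nil =>
    intro v _ hv h
    cases v with
    | nil => rfl
    | cons y t =>
      rw [sigmaw_cons_ne_c t (fun hc => hv (hc ▸ List.mem_cons_self (a := y) (l := t)))] at h
      exact absurd h (by simp [sigmaw])
  | cons x tu ih =>
    intro v hu hv h
    cases v with
    | nil =>
      rw [sigmaw_cons_ne_c tu (fun hc => hu (hc ▸ List.mem_cons_self (a := x) (l := tu)))] at h
      exact absurd h (by simp [sigmaw])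
    | cons y tv =>
      have hx : x ≠ .c := fun hc => hu (hc ▸ List.mem_cons_self (a := x) (l := tu))
      have hy : y ≠ .c := fun hc => hv (hc ▸ List.mem_cons_self (a := y) (l := tv))
      rw [sigmaw_cons_ne_c tu hx, sigmaw_cons_ne_c tv hy] at h
      simp only [List.cons.injEq] at h
      obtain ⟨-, hcomp, htail⟩ := h
      rw [comp_inj hx hy hcomp,
        ih tv (fun hc => hu (List.mem_cons_of_mem _ hc))
          (fun hc => hv (List.mem_cons_of_mem _ hc)) htail]

lemma c_not_mem_E2 (m : ℕ) : Letter.c ∉ E2 m := by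
  intro h
  have := (List.dropLast_sublist (B m ++ B (m-1))).subset h
  rcases List.mem_append.1 this with h' | h'
  · exact c_not_mem_B m h'
  · exact c_not_mem_B (m-1) h'

lemma E2_succ (k : ℕ) : E2 (k + 2) = sigmaw (E2 (k + 1)) ++ [.a] := by
  have hne : B (k+1) ++ B k ≠ [] := by
    intro h
    have := congrArg List.length h
    rw [List.length_append, length_B, length_B] at this
    simp at this
  set x := (B (k+1) ++ B k).getLast hne with hx
  have hsplit : B (k+1) ++ B k = E2 (k+1) ++ [x] := by
    rw [hx]
    exact (List.dropLast_append_getLast hne).symm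
  have hxc : x ≠ .c := by
    intro hc
    have : x ∈ B (k+1) ++ B k := List.getLast_mem hne
    rcases List.mem_append.1 this with h' | h'
    · exact c_not_mem_B (k+1) (hc ▸ h')
    · exact c_not_mem_B k (hc ▸ h')
  have hBB : B (k+2) ++ B (k+1) = (sigmaw (E2 (k+1)) ++ [.a]) ++ [comp x] := by
    have hmerge : B (k+2) ++ B (k+1) = sigmaw (B (k+1) ++ B k) := by
      rw [sigmaw_append, ← B_succ, ← B_succ]
    rw [hmerge, hsplit, sigmaw_append, sigmaw_singleton_ne_c hxc]
    simp
  show (B (k+2) ++ B (k+1)).dropLast = _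
  rw [hBB, List.dropLast_concat]

lemma E2_head : ∀ m, 1 ≤ m → ∃ t, E2 m = .a :: t := by
  intro m hm
  induction m with
  | zero => omega
  | succ m ih =>
    rcases Nat.eq_zero_or_pos m with h0 | h0
    · subst h0; exact ⟨[.a], rfl⟩
    · obtain ⟨t, ht⟩ := ih h0
      obtain ⟨k, rfl⟩ : ∃ k, m = k + 1 := ⟨m - 1, by omega⟩
      refine ⟨comp .a :: (sigmaw t ++ [.a]), ?_⟩
      rw [E2_succ k, ht, sigmaw_cons_ne_c t (by simp)]
      rfl

lemma E2_head2 (m : ℕ) (hm : 1 ≤ m) : ∃ t, E2 (m+1) = .a :: .b :: t := by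
  obtain ⟨t, ht⟩ := E2_head m hm
  obtain ⟨k, rfl⟩ : ∃ k, m = k + 1 := ⟨m - 1, by omega⟩
  refine ⟨sigmaw t ++ [.a], ?_⟩
  rw [E2_succ k, ht, sigmaw_cons_ne_c t (by simp)]
  rfl

lemma E2_one_le_length (m : ℕ) (hm : 1 ≤ m) : 1 ≤ (E2 m).length := by
  obtain ⟨t, ht⟩ := E2_head m hm
  rw [ht]; simp

lemma E2_length_succ (m : ℕ) : (E2 (m+2)).length = 2 * (E2 (m+1)).length + 1 := by
  rw [E2_succ m, List.length_append, sigmaw_length (c_not_mem_E2 (m+1))]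
  simp

lemma occ_step (m : ℕ) (hm : 1 ≤ m) (s : ℕ) :
    DOccursAt (E2 (m+1)) s ↔ ∃ i, DOccursAt (E2 m) i ∧ s = 2*i - 1 := by
  obtain ⟨k, rfl⟩ : ∃ k, m = k + 1 := ⟨m - 1, by omega⟩
  set L : ℕ := (E2 (k+1)).length with hL
  have hL1 : 1 ≤ L := E2_one_le_length _ (by omega)
  have hlen : (E2 (k+2)).length = 2*L + 1 := E2_length_succ k
  have hE : E2 (k+2) = sigmaw (E2 (k+1)) ++ [.a] := E2_succ k
  have hsig_len : (sigmaw (E2 (k+1))).length = 2 * L :=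
    sigmaw_length (c_not_mem_E2 (k+1))
  constructor
  · rintro ⟨hs, hseg⟩
    rw [hlen] at hseg
    -- D s = b
    have hDb : D s = .b := by
      obtain ⟨t, ht⟩ := E2_head2 (k+1) (by omega)
      have h1 : (Dseg s (2*L+1)).getD 1 .a = D (s - 1 + 1) := Dseg_getD _ _ _ (by omega)
      rw [hseg, ht] at h1
      rw [show s - 1 + 1 = s from by omega] at h1
      exact h1.symm
    -- s is odd
    obtain ⟨k', hk'⟩ : Odd s := by
      rcases Nat.even_or_odd s with ⟨k', hk'⟩ | ho
      · exfalso
        rw [hk', show k' + k' = 2 * k' from by ring, D_even] at hDb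
        exact Letter.noConfusion hDb
      · exact ho
    refine ⟨k' + 1, ?_, by omega⟩
    have hseg2 : Dseg s (2*L) ++ [D (s - 1 + 2*L)] = sigmaw (E2 (k+1)) ++ [.a] := by
      rw [← Dseg_succ, hseg, hE]
    have heq : Dseg s (2*L) = sigmaw (E2 (k+1)) :=
      (List.append_inj hseg2 (by rw [Dseg_length, hsig_len])).1
    have hdd : Dseg (2*(k'+1) - 1) (2*L) = sigmaw (Dseg (k'+1) L) :=
      Dseg_double (k'+1) L (by omega)
    rw [show s = 2*(k'+1) - 1 from by omega] at heq
    rw [hdd] at heq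
    have := sigmaw_inj _ _ (c_not_mem_Dseg _ _) (c_not_mem_E2 (k+1)) heq
    exact ⟨by omega, by rw [← hL, this]⟩
  · rintro ⟨i, ⟨hi, hseg⟩, rfl⟩
    refine ⟨by omega, ?_⟩
    rw [hlen, Dseg_succ, Dseg_double i L hi, hL, hseg,
      show 2*i - 1 - 1 + 2*L = 2*(i - 1 + L) from by omega, D_even, hE]

lemma occ_infinite : ∀ m, 1 ≤ m → (setOf (DOccursAt (E2 m))).Infinite := by
  intro m hm
  induction m with
  | zero => omega
  | succ m ih =>
    rcases Nat.eq_zero_or_pos m with h0 | h0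
    · subst h0
      refine Set.infinite_of_injective_forall_mem (f := fun j : ℕ => 8*j+3)
        (fun a b h => by dsimp at h; omega) (fun j => ?_)
      have := (occ_odd_iff (4*j+1)).2 (D_4j1 j)
      show DOccursAt (E2 1) (8*j+3)
      simpa [show 2*(4*j+1)+1 = 8*j+3 from by ring] using this
    · have hstep : setOf (DOccursAt (E2 (m+1))) =
          (fun i => 2*i - 1) '' setOf (DOccursAt (E2 m)) := by
        ext s
        rw [show (s ∈ setOf (DOccursAt (E2 (m+1)))) ↔ DOccursAt (E2 (m+1)) s from Iff.rfl,
          occ_step m h0 s]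
        exact ⟨fun ⟨i, h1, h2⟩ => ⟨i, h1, h2.symm⟩, fun ⟨i, h1, h2⟩ => ⟨i, h1, h2.symm⟩⟩
      rw [hstep]
      apply Set.Infinite.image ?_ (ih h0)
      intro a ha b hb hab
      have ha1 : 1 ≤ a := ha.1
      have hb1 : 1 ≤ b := hb.1
      simp only at hab
      omega

lemma count_step (m : ℕ) (hm : 1 ≤ m) :
    ∀ i, Nat.count (DOccursAt (E2 (m+1))) (2*i+1) = Nat.count (DOccursAt (E2 m)) (i+1) := by
  intro i
  induction i with
  | zero =>
    rw [show 2*0+1 = 0+1 from rfl, Nat.count_succ, Nat.count_succ,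
      if_neg (not_DOccursAt_zero _), if_neg (not_DOccursAt_zero _)]
    simp
  | succ i ih =>
    have hnot : ¬ DOccursAt (E2 (m+1)) ((2*i+1)+1) := by
      intro h
      obtain ⟨i', hi', hii⟩ := (occ_step m hm _).1 h
      have := hi'.1
      omega
    have hiff : DOccursAt (E2 (m+1)) (2*i+1) ↔ DOccursAt (E2 m) (i+1) := by
      rw [occ_step m hm]
      constructor
      · rintro ⟨i', hi', hii⟩
        have hi1 := hi'.1
        have hii2 : i' = i + 1 := by omega
        exact hii2 ▸ hi'
      · intro h
        exact ⟨i+1, h, by omega⟩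
    have e1 : Nat.count (DOccursAt (E2 (m+1))) ((2*i+1)+1+1)
        = Nat.count (DOccursAt (E2 (m+1))) (2*i+1)
          + (if DOccursAt (E2 (m+1)) (2*i+1) then 1 else 0)
          + (if DOccursAt (E2 (m+1)) ((2*i+1)+1) then 1 else 0) := by
      rw [Nat.count_succ, Nat.count_succ]
    have e2 : Nat.count (DOccursAt (E2 m)) ((i+1)+1)
        = Nat.count (DOccursAt (E2 m)) (i+1)
          + (if DOccursAt (E2 m) (i+1) then 1 else 0) := Nat.count_succ _ _
    rw [show 2*(i+1)+1 = (2*i+1)+1+1 from by ring, e1, e2, ih, if_neg hnot]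
    by_cases h : DOccursAt (E2 m) (i+1)
    · rw [if_pos (hiff.2 h), if_pos h]
    · rw [if_neg (fun hh => h (hiff.1 hh)), if_neg h]

lemma nth_step (m : ℕ) (hm : 1 ≤ m) (P : ℕ) :
    Nat.nth (DOccursAt (E2 (m+1))) P = 2 * Nat.nth (DOccursAt (E2 m)) P - 1 := by
  set x := Nat.nth (DOccursAt (E2 m)) P with hxdef
  have hxm : DOccursAt (E2 m) x := Nat.nth_mem_of_infinite (occ_infinite m hm) P
  have hx1 : 1 ≤ x := hxm.1
  have hcx : Nat.count (DOccursAt (E2 m)) x = P :=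
    Nat.count_nth_of_infinite (occ_infinite m hm) P
  have hmem : DOccursAt (E2 (m+1)) (2*x - 1) :=
    (occ_step m hm _).2 ⟨x, hxm, rfl⟩
  have hcount : Nat.count (DOccursAt (E2 (m+1))) (2*x - 1) = P := by
    rw [show 2*x - 1 = 2*(x-1)+1 from by omega, count_step m hm,
      show x - 1 + 1 = x from by omega, hcx]
  have := Nat.nth_count (p := DOccursAt (E2 (m+1))) hmem
  rw [hcount] at this
  exact this

lemma r_step (m : ℕ) (hm : 1 ≤ m) (p : ℕ) (hp : 1 ≤ p) :
    r (E2 (m+1)) p = sigmaw (r (E2 m) p) := by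
  rw [r_eq _ p hp, r_eq _ p hp, nth_step m hm, nth_step m hm]
  set x := Nat.nth (DOccursAt (E2 m)) (p-1) with hx
  set y := Nat.nth (DOccursAt (E2 m)) p with hy
  have hx1 : 1 ≤ x := (Nat.nth_mem_of_infinite (occ_infinite m hm) (p-1)).1
  have hxy : x < y := by
    rw [hx, hy]
    exact (Nat.nth_lt_nth (occ_infinite m hm)).2 (by omega)
  rw [show 2*y - 1 - (2*x - 1) = 2*(y - x) from by omega, Dseg_double x (y-x) hx1]

/-! ### Main theorem -/

/-- For every m ≥ 1 and p ≥ 1, the p-th return word of E_{2,m} in D is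
A_{m−1} if Θ₂[p] = a, A_{m−1} A_m B_{m+1} if Θ₂[p] = b, and B_m B_{m−1} if Θ₂[p] = c;
i.e. {r_p(E_{2,m})}_{p≥1} is Θ₂ over the alphabet {A_{m−1}, A_{m−1}A_mB_{m+1}, B_mB_{m−1}}. -/
theorem return_words_of_E2 (m : ℕ) (hm : 1 ≤ m) (p : ℕ) (hp : 1 ≤ p) :
    (Theta2 p = .a → r (E2 m) p = A (m - 1)) ∧
    (Theta2 p = .b → r (E2 m) p = A (m - 1) ++ A m ++ B (m + 1)) ∧
    (Theta2 p = .c → r (E2 m) p = B m ++ B (m - 1)) := by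
  induction m, hm using Nat.le_induction with
  | base => exact base_case p hp
  | succ m hm ih =>
    obtain ⟨h1, h2, h3⟩ := ih
    have hr := r_step m hm p hp
    obtain ⟨k, rfl⟩ : ∃ k, m = k + 1 := ⟨m - 1, by omega⟩
    refine ⟨fun h => ?_, fun h => ?_, fun h => ?_⟩
    · rw [hr, h1 h]
      simp only [Nat.add_sub_cancel]
      exact (A_succ k).symm
    · rw [hr, h2 h]
      simp only [Nat.add_sub_cancel]
      rw [sigmaw_append, sigmaw_append, ← A_succ, ← A_succ, ← B_succ]
    · rw [hr, h3 h]
      simp only [Nat.add_sub_cancel]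
      rw [sigmaw_append, ← B_succ, ← B_succ]
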